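/- Let f : [0,1] → ℝ be continuous and let E_f = {x ∈ (0,1) : f has a finite derivative at x}. Then the restriction of f' to E_f is a pointwise limit of a sequence of continuous functions on E_f (i.e., f'|_{E_f} is of Baire class one on E_f). -/

import Mathlib

open Set Filter Topology

theorem stmt6 (f : ℝ → ℝ) (hf : ContinuousOn f (Set.Icc 0 1)) :
    ∃ h : ℕ → ℝ → ℝ,
      (∀ n, ContinuousOn (h n) {x ∈ Set.Ioo (0:ℝ) 1 | ∃ d : ℝ, HasDerivAt f d x}) ∧
      (∀ x ∈ {x ∈ Set.Ioo (0:ℝ) 1 | ∃ d : ℝ, HasDerivAt f d x},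
        Tendsto (fun n => h n x) atTop (𝓝 (deriv f x))) := by
  set F : ℝ → ℝ := fun x => f (max 0 (min x 1)) with hFdef
  have hg : Continuous fun x : ℝ => max 0 (min x 1) := (continuous_const.max (continuous_id.min continuous_const))
  have hFc : Continuous F := hf.comp_continuous hg (fun x =>
    ⟨le_max_left _ _, max_le (by norm_num) (min_le_right _ _)⟩)
  refine ⟨fun n x => ((n:ℝ)+1) * (F (x + ((n:ℝ)+1)⁻¹) - F x), ?_, ?_⟩
  · intro n
    exact Continuous.continuousOn (by fun_prop)
  · rintro x ⟨hx, d, hd⟩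
    have hxF : F =ᶠ[𝓝 x] f := by
      filter_upwards [Ioo_mem_nhds hx.1 hx.2] with y hy
      simp only [hFdef]
      rw [min_eq_left hy.2.le, max_eq_right hy.1.le]
    have hdF : HasDerivAt F d x := hd.congr_of_eventuallyEq hxF
    rw [hd.deriv]
    have hpos : ∀ n : ℕ, (0:ℝ) < ((n:ℝ)+1)⁻¹ := fun n => by positivity
    have hu : Tendsto (fun n : ℕ => x + ((n:ℝ)+1)⁻¹) atTop (𝓝[≠] x) := by
      apply tendsto_nhdsWithin_of_tendsto_nhds_of_eventually_within
      · have h0 : Tendsto (fun n : ℕ => ((n:ℝ)+1)⁻¹) atTop (𝓝 0) := by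
          simpa using tendsto_one_div_add_atTop_nhds_zero_nat (𝕜 := ℝ)
        simpa using tendsto_const_nhds.add h0
      · filter_upwards with n
        simp only [mem_compl_iff, mem_singleton_iff]
        intro hcon
        have := hpos n
        nlinarith [hcon]
    have hslope := (hasDerivAt_iff_tendsto_slope.mp hdF).comp hu
    refine hslope.congr fun n => ?_
    simp only [Function.comp_apply, slope_def_field, div_eq_inv_mul]
    rw [add_sub_cancel_left, inv_inv]
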